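/- Two factor systems (L,σ), (L',σ') ∈ Z²(𝒢,𝒩) yield equivalent groupoid extensions 𝒩 ×_(L,σ) 𝒢 and 𝒩 ×_(L',σ') 𝒢 of 𝒢 by 𝒩 if and only if there exists h ∈ C¹(𝒢,𝒩) with (L',σ') = h.(L,σ). Moreover, every equivalence of extensions 𝒩 ×_(L,σ) 𝒢 → 𝒩 ×_(L',σ') 𝒢 is of the form (n,x) ↦ (n·h(x), x) for some such h. -/
import Mathlib


/-- A groupoid over a unit space `U`, with a total (junk-valued outside composables)
multiplication. `e : U → G` is the inclusion of units. -/
structure Gpd (G U : Type) where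
  s : G → U
  r : G → U
  e : U → G
  mul : G → G → G
  inv : G → G
  s_e : ∀ u, s (e u) = u
  r_e : ∀ u, r (e u) = u
  e_mul : ∀ x, mul (e (r x)) x = x
  mul_e : ∀ x, mul x (e (s x)) = x
  s_inv : ∀ x, s (inv x) = r x
  r_inv : ∀ x, r (inv x) = s x
  inv_mul : ∀ x, mul (inv x) x = e (s x)
  mul_inv : ∀ x, mul x (inv x) = e (r x)
  r_mul : ∀ x y, s x = r y → r (mul x y) = r x
  s_mul : ∀ x y, s x = r y → s (mul x y) = s y
  assoc : ∀ x y z, s x = r y → s y = r z → mul (mul x y) z = mul x (mul y z)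

/-- A group bundle over `U`: a total space `N` with projection `p`, each fiber being a group
(operations are total, with group laws holding fiberwise). -/
structure GrpBundle (N U : Type) where
  p : N → U
  one : U → N
  mul : N → N → N
  inv : N → N
  p_one : ∀ u, p (one u) = u
  p_mul : ∀ n m, p n = p m → p (mul n m) = p n
  p_inv : ∀ n, p (inv n) = p n
  one_mul : ∀ n, mul (one (p n)) n = n
  mul_one : ∀ n, mul n (one (p n)) = n
  inv_mul : ∀ n, mul (inv n) n = one (p n)
  mul_inv : ∀ n, mul n (inv n) = one (p n)
  assoc : ∀ a b c, p a = p b → p b = p c → mul (mul a b) c = mul a (mul b c)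

/-- A pair `(L, σ)` satisfying all the conditions of a factor system for `(𝒢, 𝒩)` except
possibly the twisted cocycle condition (F2): `L` is a family of fiberwise group isomorphisms
`L x : N_{s x} → N_{r x}`, trivial on units, and `σ : 𝒢⁽²⁾ → 𝒩` is normalized with
`σ (x, y) ∈ N_{r x}`, satisfying the twisted action condition (F1). -/
structure PreFS {G U N : Type} (𝒢 : Gpd G U) (𝒩 : GrpBundle N U) where
  L : G → N → N
  σ : G → G → N
  L_fib : ∀ x n, 𝒩.p n = 𝒢.s x → 𝒩.p (L x n) = 𝒢.r x
  L_mul : ∀ x n m, 𝒩.p n = 𝒢.s x → 𝒩.p m = 𝒢.s x →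
    L x (𝒩.mul n m) = 𝒩.mul (L x n) (L x m)
  L_bij : ∀ x, Set.BijOn (L x) {n | 𝒩.p n = 𝒢.s x} {n | 𝒩.p n = 𝒢.r x}
  L_e : ∀ u n, 𝒩.p n = u → L (𝒢.e u) n = n
  σ_fib : ∀ x y, 𝒢.s x = 𝒢.r y → 𝒩.p (σ x y) = 𝒢.r x
  σ_e_left : ∀ x, σ (𝒢.e (𝒢.r x)) x = 𝒩.one (𝒢.r x)
  σ_e_right : ∀ x, σ x (𝒢.e (𝒢.s x)) = 𝒩.one (𝒢.r x)
  F1 : ∀ x y n, 𝒢.s x = 𝒢.r y → 𝒩.p n = 𝒢.s y →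
    L x (L y n) = 𝒩.mul (𝒩.mul (σ x y) (L (𝒢.mul x y) n)) (𝒩.inv (σ x y))

/-- A factor system `(L, σ)` for `(𝒢, 𝒩)`: conditions (F1) and (F2). -/
structure FS {G U N : Type} (𝒢 : Gpd G U) (𝒩 : GrpBundle N U) extends PreFS 𝒢 𝒩 where
  F2 : ∀ x y z, 𝒢.s x = 𝒢.r y → 𝒢.s y = 𝒢.r z →
    𝒩.mul (σ x y) (σ (𝒢.mul x y) z) = 𝒩.mul (L x (σ y z)) (σ x (𝒢.mul y z))

variable {G U N : Type}

/-- The product `(n,x)(m,y) = (n ⬝ L_x(m) ⬝ σ(x,y), xy)` on `𝒩 ×_(L,σ) 𝒢`. -/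
def pmul (𝒢 : Gpd G U) (𝒩 : GrpBundle N U) (L : G → N → N) (σ : G → G → N)
    (q q' : N × G) : N × G :=
  (𝒩.mul (𝒩.mul q.1 (L q.2 q'.1)) (σ q.2 q'.2), 𝒢.mul q.2 q'.2)

/-- The inverse `(n,x)⁻¹ = (σ(x⁻¹,x)⁻¹ ⬝ L_{x⁻¹}(n⁻¹), x⁻¹)` on `𝒩 ×_(L,σ) 𝒢`. -/
def pinv (𝒢 : Gpd G U) (𝒩 : GrpBundle N U) (L : G → N → N) (σ : G → G → N)
    (q : N × G) : N × G :=
  (𝒩.mul (𝒩.inv (σ (𝒢.inv q.2) q.2)) (L (𝒢.inv q.2) (𝒩.inv q.1)), 𝒢.inv q.2)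

/-- The action of `h ∈ C¹(𝒢,𝒩)` on the `L`-part of a factor system:
`(h.L)_x(n) = h(x) L_x(n) h(x)⁻¹`. -/
def actL {G U N : Type} (𝒩 : GrpBundle N U) (h : G → N) (L : G → N → N) : G → N → N :=
  fun x n => 𝒩.mul (𝒩.mul (h x) (L x n)) (𝒩.inv (h x))

/-- The action of `h ∈ C¹(𝒢,𝒩)` on the `σ`-part of a factor system:
`(h.σ)(x,y) = h(x) L_x(h(y)) σ(x,y) h(xy)⁻¹`. -/
def actS {G U N : Type} (𝒢 : Gpd G U) (𝒩 : GrpBundle N U) (h : G → N)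
    (L : G → N → N) (σ : G → G → N) : G → G → N :=
  fun x y => 𝒩.mul (𝒩.mul (𝒩.mul (h x) (L x (h y))) (σ x y)) (𝒩.inv (h (𝒢.mul x y)))

/-- An equivalence of the groupoid extensions `𝒩 ×_(L',σ') 𝒢 → 𝒩 ×_(L,σ) 𝒢`: a map of valid
pairs which commutes with the projections to `𝒢`, restricts to the identity on `𝒩`, and is
multiplicative. -/
def IsEquivMap {G U N : Type} (𝒢 : Gpd G U) (𝒩 : GrpBundle N U)
    (F F' : FS 𝒢 𝒩) (φ : N × G → N × G) : Prop :=
  (∀ n x, 𝒩.p n = 𝒢.r x →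
      𝒩.p (φ (n, x)).1 = 𝒢.r x ∧ (φ (n, x)).2 = x) ∧
  (∀ n : N, φ (n, 𝒢.e (𝒩.p n)) = (n, 𝒢.e (𝒩.p n))) ∧
  (∀ n x m y, 𝒩.p n = 𝒢.r x → 𝒩.p m = 𝒢.r y → 𝒢.s x = 𝒢.r y →
      φ (pmul 𝒢 𝒩 F'.L F'.σ (n, x) (m, y)) =
        pmul 𝒢 𝒩 F.L F.σ (φ (n, x)) (φ (m, y)))

/-- The fiber of a group bundle over `u`, as a type. -/
abbrev Fib (𝒩 : GrpBundle N U) (u : U) : Type := {n : N // 𝒩.p n = u}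

instance (𝒩 : GrpBundle N U) (u : U) : Group (Fib 𝒩 u) where
  one := ⟨𝒩.one u, 𝒩.p_one u⟩
  mul a b := ⟨𝒩.mul a.1 b.1, by rw [𝒩.p_mul a.1 b.1 (a.2.trans b.2.symm)]; exact a.2⟩
  inv a := ⟨𝒩.inv a.1, (𝒩.p_inv a.1).trans a.2⟩
  mul_assoc a b c := Subtype.ext (𝒩.assoc a.1 b.1 c.1 (a.2.trans b.2.symm) (b.2.trans c.2.symm))
  one_mul a := Subtype.ext (by have := 𝒩.one_mul a.1; rw [a.2] at this; exact this)
  mul_one a := Subtype.ext (by have := 𝒩.mul_one a.1; rw [a.2] at this; exact this)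
  inv_mul_cancel a := Subtype.ext (by have := 𝒩.inv_mul a.1; rw [a.2] at this; exact this)

lemma L_one {𝒢 : Gpd G U} {𝒩 : GrpBundle N U} (F : PreFS 𝒢 𝒩) (x : G) :
    F.L x (𝒩.one (𝒢.s x)) = 𝒩.one (𝒢.r x) := by
  have hone : 𝒩.p (𝒩.one (𝒢.s x)) = 𝒢.s x := 𝒩.p_one _
  set a : Fib 𝒩 (𝒢.r x) := ⟨F.L x (𝒩.one (𝒢.s x)), F.L_fib x _ hone⟩ with ha
  have h1 : 𝒩.mul (𝒩.one (𝒢.s x)) (𝒩.one (𝒢.s x)) = 𝒩.one (𝒢.s x) := by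
    have := 𝒩.mul_one (𝒩.one (𝒢.s x)); rwa [hone] at this
  have h2 : a * a = a := Subtype.ext (by
    show 𝒩.mul (F.L x (𝒩.one (𝒢.s x))) (F.L x (𝒩.one (𝒢.s x))) = F.L x (𝒩.one (𝒢.s x))
    rw [← F.L_mul x _ _ hone hone, h1])
  have h3 : a = 1 := by
    have := mul_right_cancel (a := a) (b := a) (c := 1)
    exact this (by rw [h2, one_mul])
  exact congrArg Subtype.val h3

lemma equiv_to_h {𝒢 : Gpd G U} {𝒩 : GrpBundle N U} (F F' : FS 𝒢 𝒩)
    (φ : N × G → N × G) (hφ : IsEquivMap 𝒢 𝒩 F F' φ) :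
    ∃ h : G → N, (∀ x, 𝒩.p (h x) = 𝒢.r x) ∧ (∀ u, h (𝒢.e u) = 𝒩.one u) ∧
      (∀ x n, 𝒩.p n = 𝒢.s x → F'.L x n = actL 𝒩 h F.L x n) ∧
      (∀ x y, 𝒢.s x = 𝒢.r y → F'.σ x y = actS 𝒢 𝒩 h F.L F.σ x y) ∧
      (∀ n x, 𝒩.p n = 𝒢.r x → φ (n, x) = (𝒩.mul n (h x), x)) := by
  obtain ⟨hproj, hid, hmul⟩ := hφ
  set h : G → N := fun x => (φ (𝒩.one (𝒢.r x), x)).1 with hdef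
  have hfib : ∀ x, 𝒩.p (h x) = 𝒢.r x := fun x => (hproj _ x (𝒩.p_one _)).1
  have hφ1 : ∀ x, φ (𝒩.one (𝒢.r x), x) = (h x, x) :=
    fun x => Prod.ext rfl ((hproj _ x (𝒩.p_one _)).2)
  -- `φ` is the identity on the inserted copy of `𝒩`:
  have hidu : ∀ u, φ (𝒩.one u, 𝒢.e u) = (𝒩.one u, 𝒢.e u) := by
    intro u
    have := hid (𝒩.one u); rwa [𝒩.p_one u] at this
  have h_e : ∀ u, h (𝒢.e u) = 𝒩.one u := by
    intro u
    show (φ (𝒩.one (𝒢.r (𝒢.e u)), 𝒢.e u)).1 = 𝒩.one u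
    rw [𝒢.r_e u, hidu u]
  -- `φ (n, x) = (n·h(x), x)`:
  have hform : ∀ n x, 𝒩.p n = 𝒢.r x → φ (n, x) = (𝒩.mul n (h x), x) := by
    intro n x hn
    have h1 := hmul n (𝒢.e (𝒢.r x)) (𝒩.one (𝒢.r x)) x
      (by rw [𝒢.r_e]; exact hn) (𝒩.p_one _) (by rw [𝒢.s_e])
    have e1 : 𝒩.mul n (𝒩.one (𝒢.r x)) = n := by
      have := 𝒩.mul_one n; rwa [hn] at this
    have lhsarg : pmul 𝒢 𝒩 F'.L F'.σ (n, 𝒢.e (𝒢.r x)) (𝒩.one (𝒢.r x), x) = (n, x) := by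
      unfold pmul
      rw [F'.L_e (𝒢.r x) (𝒩.one (𝒢.r x)) (𝒩.p_one _), F'.σ_e_left x, 𝒢.e_mul x, e1, e1]
    have hidn : φ (n, 𝒢.e (𝒢.r x)) = (n, 𝒢.e (𝒢.r x)) := by
      have := hid n; rwa [hn] at this
    rw [lhsarg, hidn, hφ1 x] at h1
    rw [h1]
    unfold pmul
    have e2 : 𝒩.mul (𝒩.mul n (h x)) (𝒩.one (𝒢.r x)) = 𝒩.mul n (h x) := by
      have hp : 𝒩.p (𝒩.mul n (h x)) = 𝒢.r x := by
        rw [𝒩.p_mul n (h x) (hn.trans (hfib x).symm)]; exact hn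
      have := 𝒩.mul_one (𝒩.mul n (h x)); rwa [hp] at this
    rw [F.L_e (𝒢.r x) (h x) (hfib x), F.σ_e_left x, 𝒢.e_mul x, e2]
  -- the key equation (E):
  have hE : ∀ x y m, 𝒢.s x = 𝒢.r y → 𝒩.p m = 𝒢.r y →
      𝒩.mul (𝒩.mul (F'.L x m) (F'.σ x y)) (h (𝒢.mul x y)) =
        𝒩.mul (𝒩.mul (h x) (𝒩.mul (F.L x m) (F.L x (h y)))) (F.σ x y) := by
    intro x y m hxy hm
    have hms : 𝒩.p m = 𝒢.s x := hm.trans hxy.symm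
    have h1 := hmul (𝒩.one (𝒢.r x)) x m y (𝒩.p_one _) hm hxy
    have pL' : 𝒩.p (F'.L x m) = 𝒢.r x := F'.L_fib x m hms
    have e1 : 𝒩.mul (𝒩.one (𝒢.r x)) (F'.L x m) = F'.L x m := by
      have := 𝒩.one_mul (F'.L x m); rwa [pL'] at this
    have lhsarg : pmul 𝒢 𝒩 F'.L F'.σ (𝒩.one (𝒢.r x), x) (m, y) =
        (𝒩.mul (F'.L x m) (F'.σ x y), 𝒢.mul x y) := by
      unfold pmul; rw [e1]
    have pA : 𝒩.p (𝒩.mul (F'.L x m) (F'.σ x y)) = 𝒢.r (𝒢.mul x y) := by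
      rw [𝒩.p_mul _ _ (pL'.trans (F'.σ_fib x y hxy).symm), pL', 𝒢.r_mul x y hxy]
    rw [lhsarg, hform _ _ pA, hφ1 x, hform m y hm] at h1
    have h2 := congrArg Prod.fst h1
    simp only [pmul] at h2
    rw [F.L_mul x m (h y) hms ((hfib y).trans hxy.symm)] at h2
    exact h2
  refine ⟨h, hfib, h_e, ?_, ?_, hform⟩
  · -- the L-part
    intro x n hn
    have hE1 := hE x (𝒢.e (𝒢.s x)) n (𝒢.r_e _).symm (by rw [𝒢.r_e]; exact hn)
    rw [F'.σ_e_right x, F.σ_e_right x, 𝒢.mul_e x, h_e (𝒢.s x), L_one F.toPreFS x] at hE1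
    set a : Fib 𝒩 (𝒢.r x) := ⟨h x, hfib x⟩
    set b : Fib 𝒩 (𝒢.r x) := ⟨F.L x n, F.L_fib x n hn⟩
    set L' : Fib 𝒩 (𝒢.r x) := ⟨F'.L x n, F'.L_fib x n hn⟩
    have h3 : L' * 1 * a = a * (b * 1) * 1 := Subtype.ext hE1
    simp only [mul_one] at h3
    have h4 : L' = a * b * a⁻¹ := eq_mul_inv_of_mul_eq h3
    show L'.1 = (a * b * a⁻¹).1
    exact congrArg Subtype.val h4
  · -- the σ-part
    intro x y hxy
    have hE1 := hE x y (𝒩.one (𝒢.r y)) hxy (𝒩.p_one _)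
    have eL' : F'.L x (𝒩.one (𝒢.r y)) = 𝒩.one (𝒢.r x) := by
      rw [← hxy]; exact L_one F'.toPreFS x
    have eL : F.L x (𝒩.one (𝒢.r y)) = 𝒩.one (𝒢.r x) := by
      rw [← hxy]; exact L_one F.toPreFS x
    rw [eL', eL] at hE1
    set a : Fib 𝒩 (𝒢.r x) := ⟨h x, hfib x⟩
    set bh : Fib 𝒩 (𝒢.r x) := ⟨F.L x (h y), F.L_fib x (h y) ((hfib y).trans hxy.symm)⟩
    set s2 : Fib 𝒩 (𝒢.r x) := ⟨F'.σ x y, F'.σ_fib x y hxy⟩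
    set s1 : Fib 𝒩 (𝒢.r x) := ⟨F.σ x y, F.σ_fib x y hxy⟩
    set c : Fib 𝒩 (𝒢.r x) := ⟨h (𝒢.mul x y), (hfib _).trans (𝒢.r_mul x y hxy)⟩
    have h3 : (1 : Fib 𝒩 (𝒢.r x)) * s2 * c = a * (1 * bh) * s1 := Subtype.ext hE1
    simp only [one_mul] at h3
    have h4 : s2 = a * bh * s1 * c⁻¹ := eq_mul_inv_of_mul_eq h3
    show s2.1 = (a * bh * s1 * c⁻¹).1
    exact congrArg Subtype.val h4

/-- Two factor systems `(L,σ)`, `(L',σ')` yield equivalent groupoid extensions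
`𝒩 ×_(L,σ) 𝒢` and `𝒩 ×_(L',σ') 𝒢` iff there is `h ∈ C¹(𝒢,𝒩)` with `(L',σ') = h.(L,σ)`;
moreover every equivalence is of the form `(n,x) ↦ (n·h(x), x)` for such an `h`. -/
theorem stmt8 {G U N : Type} (𝒢 : Gpd G U) (𝒩 : GrpBundle N U) (F F' : FS 𝒢 𝒩) :
    ((∃ φ, IsEquivMap 𝒢 𝒩 F F' φ) ↔
      ∃ h : G → N, (∀ x, 𝒩.p (h x) = 𝒢.r x) ∧ (∀ u, h (𝒢.e u) = 𝒩.one u) ∧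
        (∀ x n, 𝒩.p n = 𝒢.s x → F'.L x n = actL 𝒩 h F.L x n) ∧
        (∀ x y, 𝒢.s x = 𝒢.r y → F'.σ x y = actS 𝒢 𝒩 h F.L F.σ x y)) ∧
    (∀ φ, IsEquivMap 𝒢 𝒩 F F' φ →
      ∃ h : G → N, (∀ x, 𝒩.p (h x) = 𝒢.r x) ∧ (∀ u, h (𝒢.e u) = 𝒩.one u) ∧
        (∀ x n, 𝒩.p n = 𝒢.s x → F'.L x n = actL 𝒩 h F.L x n) ∧
        (∀ x y, 𝒢.s x = 𝒢.r y → F'.σ x y = actS 𝒢 𝒩 h F.L F.σ x y) ∧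
        (∀ n x, 𝒩.p n = 𝒢.r x → φ (n, x) = (𝒩.mul n (h x), x))) := by
  constructor
  · constructor
    · rintro ⟨φ, hφ⟩
      obtain ⟨h, h1, h2, h3, h4, _⟩ := equiv_to_h F F' φ hφ
      exact ⟨h, h1, h2, h3, h4⟩
    · rintro ⟨h, hfib, h_e, hL, hS⟩
      refine ⟨fun q => (𝒩.mul q.1 (h q.2), q.2), ?_, ?_, ?_⟩
      · intro n x hn
        refine ⟨?_, rfl⟩
        show 𝒩.p (𝒩.mul n (h x)) = 𝒢.r x
        rw [𝒩.p_mul n (h x) (hn.trans (hfib x).symm)]; exact hn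
      · intro n
        show (𝒩.mul n (h (𝒢.e (𝒩.p n))), 𝒢.e (𝒩.p n)) = (n, 𝒢.e (𝒩.p n))
        rw [h_e (𝒩.p n), 𝒩.mul_one n]
      · intro n x m y hn hm hxy
        have hms : 𝒩.p m = 𝒢.s x := hm.trans hxy.symm
        refine Prod.ext ?_ rfl
        show 𝒩.mul (𝒩.mul (𝒩.mul n (F'.L x m)) (F'.σ x y)) (h (𝒢.mul x y)) =
          𝒩.mul (𝒩.mul (𝒩.mul n (h x)) (F.L x (𝒩.mul m (h y)))) (F.σ x y)
        rw [hL x m hms, hS x y hxy,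
          F.L_mul x m (h y) hms ((hfib y).trans hxy.symm)]
        simp only [actL, actS]
        set u := 𝒢.r x
        set n' : Fib 𝒩 u := ⟨n, hn⟩
        set a : Fib 𝒩 u := ⟨h x, hfib x⟩
        set b : Fib 𝒩 u := ⟨F.L x m, F.L_fib x m hms⟩
        set bh : Fib 𝒩 u := ⟨F.L x (h y), F.L_fib x (h y) ((hfib y).trans hxy.symm)⟩
        set s1 : Fib 𝒩 u := ⟨F.σ x y, F.σ_fib x y hxy⟩
        set c : Fib 𝒩 u := ⟨h (𝒢.mul x y), (hfib _).trans (𝒢.r_mul x y hxy)⟩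
        have key : n' * (a * b * a⁻¹) * (a * bh * s1 * c⁻¹) * c
            = n' * a * (b * bh) * s1 := by group
        exact congrArg Subtype.val key
  · intro φ hφ
    exact equiv_to_h F F' φ hφ
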